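/- arXiv:2305.12558 — 2 statements merged into one kernel-verified Lean document; each statement's English description precedes it below -/
import Mathlib

section
/- If w ∈ S_n is a dominant permutation, then the Grothendieck polynomial G_w equals the monomial ∏_{(i,j) ∈ D(w)} x_i; in particular G_w is a monomial of degree |D(w)| = |λ(w)| = ℓ(w). -/
open MvPolynomial

open MvPolynomial

/-- Coxeter length: the number of inversions of `w`. -/
def invLen {n : ℕ} (w : Equiv.Perm (Fin n)) : ℕ :=
  (Finset.univ.filter fun p : Fin n × Fin n => p.1 < p.2 ∧ w p.2 < w p.1).card

/-- `G : w ↦ G_w` is the family of Grothendieck polynomials: `G_{w₀} = ∏ xᵢ^{n-i}` for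
the longest element `w₀`, and whenever `ℓ(w sᵢ) = ℓ(w) - 1`, `G_{w sᵢ} = πᵢ(G_w)` where
`πᵢ(f) = ∂ᵢ((1 - x_{i+1}) f)` and `∂ᵢ(f) = (f - sᵢ f)/(xᵢ - x_{i+1})`; the divided
difference recursion is encoded by clearing the denominator `xᵢ - x_{i+1}`. -/
def IsGrothendieckFamily (n : ℕ) (G : Equiv.Perm (Fin n) → MvPolynomial (Fin n) ℤ) : Prop :=
  G Fin.revPerm = (∏ i : Fin n, (X i : MvPolynomial (Fin n) ℤ) ^ (n - 1 - (i : ℕ))) ∧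
  ∀ (w : Equiv.Perm (Fin n)) (i : Fin n) (hi : (i : ℕ) + 1 < n),
    invLen (w * Equiv.swap i ⟨(i : ℕ) + 1, hi⟩) + 1 = invLen w →
    (X i - X ⟨(i : ℕ) + 1, hi⟩) * G (w * Equiv.swap i ⟨(i : ℕ) + 1, hi⟩)
      = (1 - X ⟨(i : ℕ) + 1, hi⟩) * G w
        - rename (⇑(Equiv.swap i ⟨(i : ℕ) + 1, hi⟩)) ((1 - X ⟨(i : ℕ) + 1, hi⟩) * G w)

/-- The Rothe diagram of `w` (0-based): boxes `(i,j)` with `j < w i` and `i < w⁻¹ j`. -/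
def rotheDiagram {n : ℕ} (w : Equiv.Perm (Fin n)) : Finset (Fin n × Fin n) :=
  Finset.univ.filter fun p => p.2 < w p.1 ∧ p.1 < w⁻¹ p.2

/-- The essential set `E(w)`. -/
def essentialSet {n : ℕ} (w : Equiv.Perm (Fin n)) : Finset (Fin n × Fin n) :=
  (rotheDiagram w).filter fun p =>
    (∀ q ∈ rotheDiagram w, ¬(q.1 = p.1 ∧ (q.2 : ℕ) = (p.2 : ℕ) + 1)) ∧
    (∀ q ∈ rotheDiagram w, ¬((q.1 : ℕ) = (p.1 : ℕ) + 1 ∧ q.2 = p.2))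

/-- The effective region `λ(w)`: all boxes weakly northwest of some essential set box. -/
def effRegion {n : ℕ} (w : Equiv.Perm (Fin n)) : Finset (Fin n × Fin n) :=
  Finset.univ.filter fun p => ∃ q ∈ essentialSet w, p.1 ≤ q.1 ∧ p.2 ≤ q.2

/-- `w` is dominant if its Rothe diagram equals its effective region. -/
def IsDominant {n : ℕ} (w : Equiv.Perm (Fin n)) : Prop :=
  rotheDiagram w = effRegion w


section Aux

variable {n : ℕ}

lemma mem_rothe {w : Equiv.Perm (Fin n)} {p : Fin n × Fin n} :
    p ∈ rotheDiagram w ↔ p.2 < w p.1 ∧ p.1 < w⁻¹ p.2 := by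
  simp [rotheDiagram]

/-- The Rothe diagram is downward closed. -/
def RClosed (w : Equiv.Perm (Fin n)) : Prop :=
  ∀ p ∈ rotheDiagram w, ∀ q : Fin n × Fin n, q.1 ≤ p.1 → q.2 ≤ p.2 → q ∈ rotheDiagram w

lemma card_rothe (w : Equiv.Perm (Fin n)) : (rotheDiagram w).card = invLen w := by
  unfold invLen rotheDiagram
  apply Finset.card_nbij' (i := fun p => (p.1, w⁻¹ p.2)) (j := fun p => (p.1, w p.2))
  · intro p hp
    simp only [Finset.mem_coe, Finset.mem_filter, Finset.mem_univ, true_and] at hp ⊢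
    exact ⟨hp.2, by simp [hp.1]⟩
  · intro p hp
    simp only [Finset.mem_coe, Finset.mem_filter, Finset.mem_univ, true_and] at hp ⊢
    exact ⟨hp.2, by simp [hp.1]⟩
  · intro p _; simp
  · intro p _; simp

lemma closed_of_dominant {w : Equiv.Perm (Fin n)} (hw : IsDominant w) : RClosed w := by
  intro p hp q hq1 hq2
  rw [IsDominant] at hw
  rw [hw] at hp ⊢
  simp only [effRegion, Finset.mem_filter, Finset.mem_univ, true_and] at hp ⊢
  obtain ⟨r, hr, h1, h2⟩ := hp
  exact ⟨r, hr, le_trans hq1 h1, le_trans hq2 h2⟩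

lemma dominant_of_closed {w : Equiv.Perm (Fin n)} (h : RClosed w) : IsDominant w := by
  rw [IsDominant]
  ext p
  simp only [effRegion, Finset.mem_filter, Finset.mem_univ, true_and]
  constructor
  · intro hp
    obtain ⟨q, hq, hmax⟩ := Set.Finite.exists_maximalFor id
      {r : Fin n × Fin n | r ∈ rotheDiagram w ∧ p.1 ≤ r.1 ∧ p.2 ≤ r.2} (Set.toFinite _)
      ⟨p, hp, le_rfl, le_rfl⟩
    simp only [Set.mem_setOf_eq] at hq
    refine ⟨q, ?_, hq.2.1, hq.2.2⟩
    simp only [essentialSet, Finset.mem_filter]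
    refine ⟨hq.1, ?_, ?_⟩
    · rintro r hr ⟨h1, h2⟩
      have h1' : q.1 ≤ r.1 := le_of_eq h1.symm
      have h2' : q.2 ≤ r.2 := by rw [Fin.le_def]; omega
      have hqr : q = r := le_antisymm (Prod.le_def.mpr ⟨h1', h2'⟩)
        (hmax (j := r) ⟨hr, hq.2.1.trans h1', hq.2.2.trans h2'⟩ (Prod.le_def.mpr ⟨h1', h2'⟩))
      rw [hqr] at h2; omega
    · rintro r hr ⟨h1, h2⟩
      have h1' : q.1 ≤ r.1 := by rw [Fin.le_def]; omega
      have h2' : q.2 ≤ r.2 := le_of_eq h2.symm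
      have hqr : q = r := le_antisymm (Prod.le_def.mpr ⟨h1', h2'⟩)
        (hmax (j := r) ⟨hr, hq.2.1.trans h1', hq.2.2.trans h2'⟩ (Prod.le_def.mpr ⟨h1', h2'⟩))
      rw [hqr] at h1; omega
  · rintro ⟨q, hq, h1, h2⟩
    have hqD : q ∈ rotheDiagram w := (Finset.mem_filter.mp hq).1
    exact h q hqD p h1 h2

end Aux

section Aux2

variable {n : ℕ}

lemma prod_X_eq_monomial {σ : Type*} (s : Finset (σ × σ)) :
    (∏ p ∈ s, (X p.1 : MvPolynomial σ ℤ)) = monomial (∑ p ∈ s, Finsupp.single p.1 1) 1 := by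
  classical
  induction s using Finset.induction with
  | empty => simp
  | insert a s h ih =>
    rw [Finset.prod_insert h, Finset.sum_insert h, ih, X, monomial_mul, mul_one]

lemma totalDegree_prod_X {σ : Type*} (s : Finset (σ × σ)) :
    (∏ p ∈ s, (X p.1 : MvPolynomial σ ℤ)).totalDegree = s.card := by
  classical
  rw [prod_X_eq_monomial, totalDegree_monomial _ one_ne_zero]
  induction s using Finset.induction with
  | empty => simp
  | insert a s h ih =>
    rw [Finset.sum_insert h, Finset.card_insert_of_notMem h,
      Finsupp.sum_add_index' (fun _ => rfl) (fun _ _ _ => rfl), ih,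
      Finsupp.sum_single_index rfl]
    omega

lemma prod_rothe_rev :
    (∏ p ∈ rotheDiagram (Fin.revPerm : Equiv.Perm (Fin n)), (X p.1 : MvPolynomial (Fin n) ℤ))
      = ∏ i : Fin n, (X i : MvPolynomial (Fin n) ℤ) ^ (n - 1 - (i : ℕ)) := by
  classical
  rw [← Finset.prod_fiberwise_of_maps_to (g := Prod.fst) (fun p _ => Finset.mem_univ p.1)
    (fun p => (X p.1 : MvPolynomial (Fin n) ℤ))]
  refine Finset.prod_congr rfl fun i _ => ?_
  have h1 : ∀ p ∈ (rotheDiagram (Fin.revPerm : Equiv.Perm (Fin n))).filter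
      (fun p => p.1 = i), (X p.1 : MvPolynomial (Fin n) ℤ) = X i := by
    intro p hp
    rw [(Finset.mem_filter.mp hp).2]
  rw [Finset.prod_congr rfl h1, Finset.prod_const]
  congr 1
  have hmem : ∀ p : Fin n × Fin n,
      (p ∈ (rotheDiagram (Fin.revPerm : Equiv.Perm (Fin n))).filter (fun p => p.1 = i)
        ↔ p.1 = i ∧ (i : ℕ) + (p.2 : ℕ) < n - 1) := by
    intro p
    simp only [Finset.mem_filter, mem_rothe, Fin.revPerm_apply]
    constructor
    · rintro ⟨⟨ha, hb⟩, rfl⟩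
      rw [Fin.lt_def, Fin.val_rev] at ha
      have := p.1.isLt
      exact ⟨rfl, by omega⟩
    · rintro ⟨rfl, hlt⟩
      have h1 := p.1.isLt
      have h2 := p.2.isLt
      refine ⟨⟨?_, ?_⟩, rfl⟩
      · rw [Fin.lt_def, Fin.val_rev]; omega
      · show p.1 < Fin.revPerm⁻¹ p.2
        rw [show (Fin.revPerm⁻¹ : Equiv.Perm (Fin n)) = Fin.revPerm from rfl,
          Fin.revPerm_apply, Fin.lt_def, Fin.val_rev]
        omega
  rw [← Finset.card_range (n - 1 - (i : ℕ))]
  apply Finset.card_nbij' (i := fun p => (p.2 : ℕ)) (j := fun m => ((i, ⟨m % n, Nat.mod_lt _ i.pos⟩) : Fin n × Fin n))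
  · intro p hp
    rw [Finset.mem_coe, hmem] at hp
    simp only [Finset.mem_coe, Finset.mem_range]
    omega
  · intro m hm
    simp only [Finset.mem_coe, Finset.mem_range] at hm
    have hin := i.isLt
    rw [Finset.mem_coe, hmem]
    refine ⟨rfl, ?_⟩
    simp only []
    have : m % n = m := Nat.mod_eq_of_lt (by omega)
    rw [this]
    omega
  · intro p hp
    rw [Finset.mem_coe, hmem] at hp
    obtain ⟨h1, h2⟩ := hp
    have : ((p.2 : ℕ)) % n = (p.2 : ℕ) := Nat.mod_eq_of_lt p.2.isLt
    ext
    · simp [h1]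
    · simp [this]
  · intro m hm
    simp only [Finset.mem_coe, Finset.mem_range] at hm
    have hin := i.isLt
    simp only []
    exact Nat.mod_eq_of_lt (by omega)

end Aux2

section Aux3

variable {n : ℕ}

lemma decr_helper {w : Equiv.Perm (Fin n)} {i : Fin n}
    (h : ∀ k : ℕ, k < (i : ℕ) → ∀ (hk : k + 1 < n), w ⟨k + 1, hk⟩ < w ⟨k, by omega⟩) :
    ∀ a : Fin n, a < i → w i < w a := by
  suffices H : ∀ d : ℕ, ∀ a : Fin n, (a : ℕ) + d = (i : ℕ) → d ≠ 0 → w i < w a by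
    intro a ha
    exact H ((i : ℕ) - (a : ℕ)) a (by have := Fin.lt_def.mp ha; omega)
      (by have := Fin.lt_def.mp ha; omega)
  intro d
  induction d with
  | zero => intro a _ hd; exact absurd rfl hd
  | succ d ih =>
    intro a ha _
    have hlt : (a : ℕ) < (i : ℕ) := by omega
    have hk : (a : ℕ) + 1 < n := by have := i.isLt; omega
    have h1 : w ⟨(a : ℕ) + 1, hk⟩ < w ⟨(a : ℕ), by omega⟩ := h (a : ℕ) hlt hk
    have ha' : w ⟨(a : ℕ), by omega⟩ = w a := by congr 1
    rw [ha'] at h1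
    rcases Nat.eq_zero_or_pos d with hd | hd
    · subst hd
      have : i = ⟨(a : ℕ) + 1, hk⟩ := by ext; simp only [Fin.val_mk]; omega
      rw [this]; exact h1
    · exact lt_trans (ih ⟨(a : ℕ) + 1, hk⟩ (by have hv : ((⟨(a : ℕ) + 1, hk⟩ : Fin n) : ℕ) = (a : ℕ) + 1 := rfl; omega) (by omega)) h1

lemma eq_rev_of_no_ascent {w : Equiv.Perm (Fin n)}
    (h : ∀ k : ℕ, ∀ (hk : k + 1 < n), w ⟨k + 1, hk⟩ < w ⟨k, by omega⟩) :
    w = Fin.revPerm := by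
  have hanti : ∀ a b : Fin n, a < b → w b < w a := by
    intro a b hab
    exact decr_helper (fun k hk hk1 => h k hk1) a hab
  have hmono : StrictMono (fun x : Fin n => w x.rev) := by
    intro a b hab
    have hrev : b.rev < a.rev := by
      rw [Fin.lt_def, Fin.val_rev, Fin.val_rev]
      have := Fin.lt_def.mp hab
      have := a.isLt; have := b.isLt
      omega
    exact hanti b.rev a.rev hrev
  have hsurj : Function.Surjective (fun x : Fin n => w x.rev) := by
    intro y
    exact ⟨(w⁻¹ y).rev, by simp⟩
  have hoi : StrictMono.orderIsoOfSurjective _ hmono hsurj = OrderIso.refl (Fin n) :=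
    Subsingleton.elim _ _
  have happ : ∀ x : Fin n, w x.rev = x := by
    intro x
    have h2 := congrFun (congrArg (fun e : Fin n ≃o Fin n => (e : Fin n → Fin n)) hoi) x
    simp only [StrictMono.coe_orderIsoOfSurjective, OrderIso.coe_refl, id_eq] at h2
    exact h2
  ext x
  have := happ x.rev
  rw [Fin.rev_rev] at this
  simp [this]

end Aux3

section Aux4

variable {n : ℕ}

lemma step_main (w : Equiv.Perm (Fin n)) (hw : RClosed w) (i : Fin n) (hi : (i : ℕ) + 1 < n)
    (hdec : ∀ a : Fin n, a < i → w i < w a)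
    (hasc : w i < w ⟨(i : ℕ) + 1, hi⟩) :
    rotheDiagram (w * Equiv.swap i ⟨(i : ℕ) + 1, hi⟩) = insert (i, w i) (rotheDiagram w)
    ∧ (i, w i) ∉ rotheDiagram w
    ∧ RClosed (w * Equiv.swap i ⟨(i : ℕ) + 1, hi⟩)
    ∧ ∀ p : Fin n × Fin n,
        (p ∈ rotheDiagram w ↔ (Equiv.swap i ⟨(i : ℕ) + 1, hi⟩ p.1, p.2) ∈ rotheDiagram w) := by
  set i' : Fin n := ⟨(i : ℕ) + 1, hi⟩ with hi'def
  have hi'v : (i' : ℕ) = (i : ℕ) + 1 := rfl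
  have hii : i < i' := by rw [Fin.lt_def, hi'v]; omega
  have hne : i ≠ i' := ne_of_lt hii
  have S1 : ∀ b : Fin n, b < w i → i' < w⁻¹ b := by
    intro b hb
    by_contra hle
    push_neg at hle
    have hwa : w (w⁻¹ b) = b := w.apply_symm_apply b
    rcases lt_trichotomy (w⁻¹ b) i with h | h | h
    · exact absurd hb (not_lt_of_gt (hwa ▸ hdec _ h))
    · rw [h] at hwa
      rw [hwa] at hb
      exact lt_irrefl _ hb
    · have hbi' : w⁻¹ b = i' := by
        rw [Fin.ext_iff]
        have h1 := Fin.lt_def.mp h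
        have h2 := Fin.le_def.mp hle
        omega
      rw [hbi'] at hwa
      rw [← hwa] at hb
      exact absurd hasc (not_lt_of_gt hb)
  have S2 : ∀ b : Fin n, ((i, b) ∈ rotheDiagram w ↔ b < w i) := by
    intro b
    rw [mem_rothe]
    exact ⟨fun h => h.1, fun hb => ⟨hb, lt_trans hii (S1 b hb)⟩⟩
  have S3 : ∀ b : Fin n, w i < b → b < w i' → w⁻¹ b < i := by
    intro b h1 h2
    by_contra hle
    push_neg at hle
    have hwa : w (w⁻¹ b) = b := w.apply_symm_apply b
    have hnei : w⁻¹ b ≠ i := by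
      intro h; rw [h] at hwa; rw [hwa] at h1; exact lt_irrefl _ h1
    have hnei' : w⁻¹ b ≠ i' := by
      intro h; rw [h] at hwa; rw [hwa] at h2; exact lt_irrefl _ h2
    have hgt : i' < w⁻¹ b := by
      rw [Fin.lt_def, hi'v]
      have h3 := Fin.le_def.mp hle
      have h4 : ((w⁻¹ b : Fin n) : ℕ) ≠ (i : ℕ) := fun h => hnei (Fin.ext h)
      have h5 : ((w⁻¹ b : Fin n) : ℕ) ≠ (i : ℕ) + 1 := fun h => hnei' (Fin.ext (by rw [h, hi'v]))
      omega
    have hmem : (i', b) ∈ rotheDiagram w := mem_rothe.mpr ⟨h2, hgt⟩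
    have hmem2 : ((i', w i) : Fin n × Fin n) ∈ rotheDiagram w :=
      hw _ hmem (i', w i) le_rfl (le_of_lt h1)
    have hx := (mem_rothe.mp hmem2).2
    simp only [Equiv.Perm.inv_def, Equiv.symm_apply_apply] at hx
    exact absurd hx (not_lt_of_gt hii)
  have S4 : ∀ b : Fin n, ((i', b) ∈ rotheDiagram w ↔ b < w i) := by
    intro b
    rw [mem_rothe]
    constructor
    · rintro ⟨hb', hbinv⟩
      by_contra hge
      push_neg at hge
      rcases eq_or_lt_of_le hge with h | h
      · rw [← h] at hbinv
        simp only [Equiv.Perm.inv_def, Equiv.symm_apply_apply] at hbinv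
        exact absurd hbinv (not_lt_of_gt hii)
      · exact absurd (lt_trans (S3 b h hb') hii) (not_lt_of_gt hbinv)
    · intro hb
      exact ⟨lt_trans hb hasc, S1 b hb⟩
  have humem : ∀ a b : Fin n,
      ((a, b) ∈ rotheDiagram (w * Equiv.swap i i')
        ↔ (b < w (Equiv.swap i i' a) ∧ a < Equiv.swap i i' (w⁻¹ b))) := by
    intro a b
    rw [mem_rothe]
    simp only [Equiv.Perm.mul_apply, mul_inv_rev, Equiv.swap_inv]
  have hfix : ∀ a : Fin n, a ≠ i → a ≠ i' → Equiv.swap i i' a = a := fun a h1 h2 =>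
    Equiv.swap_apply_of_ne_of_ne h1 h2
  have hinvne : ∀ b : Fin n, b < w i → Equiv.swap i i' (w⁻¹ b) = w⁻¹ b := by
    intro b hb
    have hS1 := S1 b hb
    have hnei : w⁻¹ b ≠ i := by
      intro h; rw [h] at hS1; exact absurd (lt_trans hii hS1) (lt_irrefl _)
    have hnei' : w⁻¹ b ≠ i' := by
      intro h; rw [h] at hS1; exact lt_irrefl _ hS1
    exact hfix _ hnei hnei'
  have T_i : ∀ b : Fin n, ((i, b) ∈ rotheDiagram (w * Equiv.swap i i') ↔ (b < w i ∨ b = w i)) := by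
    intro b
    rw [humem, Equiv.swap_apply_left]
    constructor
    · rintro ⟨hb', hsw⟩
      rcases lt_trichotomy b (w i) with hb | hb | hb
      · exact Or.inl hb
      · exact Or.inr hb
      · exfalso
        have hS3 := S3 b hb hb'
        have hnei : w⁻¹ b ≠ i := ne_of_lt hS3
        have hnei' : w⁻¹ b ≠ i' := ne_of_lt (lt_trans hS3 hii)
        rw [hfix _ hnei hnei'] at hsw
        exact absurd hsw (not_lt_of_gt hS3)
    · rintro (hb | hb)
      · refine ⟨lt_trans hb hasc, ?_⟩
        rw [hinvne b hb]
        exact lt_trans hii (S1 b hb)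
      · have hinv : w⁻¹ b = i := by rw [hb]; exact w.symm_apply_apply i
        rw [hinv, Equiv.swap_apply_left]
        exact ⟨by rw [hb]; exact hasc, hii⟩
  have T_i' : ∀ b : Fin n, ((i', b) ∈ rotheDiagram (w * Equiv.swap i i') ↔ b < w i) := by
    intro b
    rw [humem, Equiv.swap_apply_right]
    constructor
    · rintro ⟨hb, _⟩; exact hb
    · intro hb
      refine ⟨hb, ?_⟩
      rw [hinvne b hb]
      exact S1 b hb
  have T_other : ∀ a b : Fin n, a ≠ i → a ≠ i' →
      ((a, b) ∈ rotheDiagram (w * Equiv.swap i i') ↔ (a, b) ∈ rotheDiagram w) := by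
    intro a b hai hai'
    rw [humem, hfix a hai hai', mem_rothe]
    have hswapinv : (a < Equiv.swap i i' (w⁻¹ b) ↔ a < w⁻¹ b) := by
      have hav : (a : ℕ) ≠ (i : ℕ) := fun h => hai (Fin.ext h)
      have hav' : (a : ℕ) ≠ (i : ℕ) + 1 := fun h => hai' (Fin.ext (by rw [h, hi'v]))
      by_cases hc : w⁻¹ b = i
      · rw [hc, Equiv.swap_apply_left, Fin.lt_def, Fin.lt_def, hi'v]
        omega
      · by_cases hc' : w⁻¹ b = i'
        · rw [hc', Equiv.swap_apply_right, Fin.lt_def, Fin.lt_def, hi'v]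
          omega
        · rw [hfix _ hc hc']
    rw [hswapinv]
  have goal1 : rotheDiagram (w * Equiv.swap i i') = insert (i, w i) (rotheDiagram w) := by
    ext p
    obtain ⟨a, b⟩ := p
    rw [Finset.mem_insert, Prod.mk.injEq]
    by_cases hai : a = i
    · rw [hai, T_i b, S2 b]
      tauto
    · by_cases hai' : a = i'
      · rw [hai', T_i' b, S4 b]
        have hne' : ¬(i' = i) := fun h => hne h.symm
        tauto
      · rw [T_other a b hai hai']
        tauto
  refine ⟨goal1, ?_, ?_, ?_⟩
  · rw [S2]
    exact lt_irrefl _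
  · intro p hp q hq1 hq2
    rw [goal1, Finset.mem_insert] at hp ⊢
    rcases hp with hp | hp
    · obtain ⟨a, b⟩ := q
      rw [hp] at hq1 hq2
      simp only at hq1 hq2
      rcases eq_or_lt_of_le hq2 with hb | hb
      · rcases eq_or_lt_of_le hq1 with ha | ha
        · exact Or.inl (by rw [Prod.mk.injEq]; exact ⟨ha, hb⟩)
        · refine Or.inr (mem_rothe.mpr ⟨?_, ?_⟩)
          · rw [hb]; exact hdec a ha
          · rw [hb]
            simp only [Equiv.Perm.inv_def, Equiv.symm_apply_apply]
            exact ha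
      · refine Or.inr (mem_rothe.mpr ⟨?_, ?_⟩)
        · rcases eq_or_lt_of_le hq1 with ha | ha
          · rw [ha]; exact hb
          · exact lt_trans hb (hdec a ha)
        · exact lt_of_le_of_lt hq1 (lt_trans hii (S1 b hb))
    · exact Or.inr (hw _ hp q hq1 hq2)
  · intro p
    obtain ⟨a, b⟩ := p
    simp only
    by_cases hai : a = i
    · rw [hai, Equiv.swap_apply_left, S2, S4]
    · by_cases hai' : a = i'
      · rw [hai', Equiv.swap_apply_right, S2, S4]
      · rw [hfix a hai hai']

end Aux4

lemma main_aux (n : ℕ) (G : Equiv.Perm (Fin n) → MvPolynomial (Fin n) ℤ)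
    (hG : IsGrothendieckFamily n G) :
    ∀ (m : ℕ) (w : Equiv.Perm (Fin n)), RClosed w → n * n - invLen w = m →
      G w = ∏ p ∈ rotheDiagram w, (X p.1 : MvPolynomial (Fin n) ℤ) := by
  intro m
  induction m using Nat.strong_induction_on with
  | _ m ih =>
    intro w hw hm
    by_cases hasc : ∃ k : ℕ, ∃ hk : k + 1 < n, w ⟨k, Nat.lt_of_succ_lt hk⟩ < w ⟨k + 1, hk⟩
    · classical
      set P : ℕ → Prop :=
        fun k => ∃ hk : k + 1 < n, w ⟨k, Nat.lt_of_succ_lt hk⟩ < w ⟨k + 1, hk⟩ with hP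
      have hasc' : ∃ k, P k := hasc
      obtain ⟨hk₀, hwk⟩ := Nat.find_spec hasc'
      have hmin : ∀ k, k < Nat.find hasc' → ¬ P k := fun k hk => Nat.find_min hasc' hk
      set k₀ := Nat.find hasc' with hk₀def
      set i : Fin n := ⟨k₀, Nat.lt_of_succ_lt hk₀⟩ with hidef
      have hi : (i : ℕ) + 1 < n := hk₀
      set i' : Fin n := ⟨(i : ℕ) + 1, hi⟩ with hi'def
      have hasc2 : w i < w i' := hwk
      have hdec : ∀ a : Fin n, a < i → w i < w a := by
        apply decr_helper
        intro k hk hk1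
        have hnot : ¬ (w ⟨k, Nat.lt_of_succ_lt hk1⟩ < w ⟨k + 1, hk1⟩) := by
          intro hlt
          exact hmin k hk ⟨hk1, hlt⟩
        exact lt_of_le_of_ne (le_of_not_gt hnot)
          ((Equiv.injective w).ne (Fin.ne_of_val_ne (by simp)))
      obtain ⟨hD, hnotmem, hclosed, hsym⟩ := step_main w hw i hi hdec hasc2
      set u := w * Equiv.swap i i' with hu
      have hlen_u : invLen u = invLen w + 1 := by
        rw [← card_rothe, ← card_rothe, hD, Finset.card_insert_of_notMem hnotmem]
      have hub : invLen u ≤ n * n := by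
        unfold invLen
        calc (Finset.univ.filter fun p : Fin n × Fin n => p.1 < p.2 ∧ u p.2 < u p.1).card
            ≤ (Finset.univ : Finset (Fin n × Fin n)).card := Finset.card_filter_le _ _
          _ = n * n := by simp [Finset.card_univ]
      have hGu : G u = ∏ p ∈ rotheDiagram u, (X p.1 : MvPolynomial (Fin n) ℤ) :=
        ih (n * n - invLen u) (by omega) u hclosed rfl
      have huw : u * Equiv.swap i i' = w := by
        rw [hu, mul_assoc, Equiv.swap_mul_self, mul_one]
      have hrec := hG.2 u i hi (by rw [huw, hlen_u])
      rw [huw] at hrec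
      set M := ∏ p ∈ rotheDiagram w, (X p.1 : MvPolynomial (Fin n) ℤ) with hM
      have hGu' : G u = X i * M := by
        rw [hGu, hD, Finset.prod_insert hnotmem]
      have hrenM : rename (⇑(Equiv.swap i i')) M = M := by
        rw [hM, map_prod]
        simp only [rename_X]
        apply Finset.prod_nbij' (i := fun p : Fin n × Fin n => ((Equiv.swap i i') p.1, p.2))
          (j := fun p : Fin n × Fin n => ((Equiv.swap i i') p.1, p.2))
        · intro p hp
          exact (hsym p).mp hp
        · intro p hp
          have := (hsym ((Equiv.swap i i') p.1, p.2)).mpr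
          simp only [hi'def, Equiv.swap_apply_self] at this
          exact this hp
        · intro p _
          simp [Equiv.swap_apply_self]
        · intro p _
          simp [Equiv.swap_apply_self]
        · intro p _
          simp
      have hne : i ≠ i' := by
        intro h
        have := congrArg Fin.val h
        simp [hi'def] at this
      rw [hGu'] at hrec
      have hrename : rename (⇑(Equiv.swap i i')) ((1 - X i') * (X i * M))
          = (1 - X i) * ((X i' : MvPolynomial (Fin n) ℤ) * M) := by
        rw [map_mul, map_mul, map_sub, map_one, rename_X, rename_X,
          Equiv.swap_apply_right, Equiv.swap_apply_left, hrenM]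
      rw [hrename] at hrec
      have hfactor : (1 - X i') * ((X i : MvPolynomial (Fin n) ℤ) * M)
          - (1 - X i) * (X i' * M) = (X i - X i') * M := by ring
      rw [hfactor] at hrec
      have hXne : (X i - X i' : MvPolynomial (Fin n) ℤ) ≠ 0 :=
        sub_ne_zero.mpr (fun h => hne (X_injective h))
      exact mul_left_cancel₀ hXne hrec
    · push_neg at hasc
      have hrev : w = Fin.revPerm := by
        apply eq_rev_of_no_ascent
        intro k hk
        exact lt_of_le_of_ne (hasc k hk)
          ((Equiv.injective w).ne (Fin.ne_of_val_ne (by simp)))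
      rw [hrev, hG.1, ← prod_rothe_rev]


/-- If `w ∈ S_n` is dominant, then `G_w = ∏_{(i,j) ∈ D(w)} xᵢ`; in particular `G_w` is
a monomial of degree `|D(w)| = |λ(w)| = ℓ(w)`. -/
theorem grothendieck_of_dominant (n : ℕ)
    (G : Equiv.Perm (Fin n) → MvPolynomial (Fin n) ℤ) (hG : IsGrothendieckFamily n G)
    (w : Equiv.Perm (Fin n)) (hw : IsDominant w) :
    G w = (∏ p ∈ rotheDiagram w, (X p.1 : MvPolynomial (Fin n) ℤ)) ∧
    (rotheDiagram w).card = (effRegion w).card ∧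
    (effRegion w).card = invLen w ∧
    (G w).totalDegree = invLen w := by
  have hw' : rotheDiagram w = effRegion w := hw
  have hmain : G w = ∏ p ∈ rotheDiagram w, (X p.1 : MvPolynomial (Fin n) ℤ) :=
    main_aux n G hG (n * n - invLen w) w (closed_of_dominant hw) rfl
  refine ⟨hmain, by rw [hw'], by rw [← hw', card_rothe], ?_⟩
  rw [hmain, totalDegree_prod_X, card_rothe]
end

section
/- Let w ∈ S_n be a non-identity permutation with last descent g, let m > g be the largest index with w(m) < w(g), and set w' = w t_{g↔m}. Then (g, w(m)) is an element of the essential set E(w) that is maximally southeast in D(w), the Rothe diagram satisfies D(w') = D(w) \ {(g, w(m))}, and consequently λ(w') ⊊ λ(w). -/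
open MvPolynomial

lemma mem_rotheDiagram {n : ℕ} (w : Equiv.Perm (Fin n)) (p : Fin n × Fin n) :
    p ∈ rotheDiagram w ↔ p.2 < w p.1 ∧ p.1 < w⁻¹ p.2 := by
  simp [rotheDiagram]

/-- The effective region is also the NW closure of the Rothe diagram itself. -/
lemma mem_effRegion_iff {n : ℕ} (w : Equiv.Perm (Fin n)) (p : Fin n × Fin n) :
    p ∈ effRegion w ↔ ∃ q ∈ rotheDiagram w, p.1 ≤ q.1 ∧ p.2 ≤ q.2 := by
  constructor
  · intro hp
    rw [effRegion, Finset.mem_filter] at hp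
    obtain ⟨-, q, hq, h⟩ := hp
    rw [essentialSet, Finset.mem_filter] at hq
    exact ⟨q, hq.1, h.1, h.2⟩
  · rintro ⟨q, hq, h1, h2⟩
    obtain ⟨e, he, hmax⟩ : ∃ e ∈ ((rotheDiagram w).filter fun r => q ≤ r),
        ∀ r ∈ ((rotheDiagram w).filter fun r => q ≤ r), ¬e < r := by
      obtain ⟨e, he⟩ := Finset.exists_maximal (s := (rotheDiagram w).filter fun r => q ≤ r)
        ⟨q, by simp [hq]⟩
      exact ⟨e, he.1, fun r hr hlt => hlt.not_ge (he.2 hr hlt.le)⟩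
    rw [Finset.mem_filter] at he
    obtain ⟨heD, hqe⟩ := he
    have heE : e ∈ essentialSet w := by
      rw [essentialSet, Finset.mem_filter]
      refine ⟨heD, ?_, ?_⟩
      · rintro r hr ⟨hc1, hc2⟩
        have h2' : e.2 < r.2 := by rw [Fin.lt_def]; omega
        have hle : e ≤ r := Prod.le_def.mpr ⟨le_of_eq hc1.symm, h2'.le⟩
        have hlt : e < r := lt_of_le_of_ne hle (fun h => by
          rw [h] at h2'; exact lt_irrefl _ h2')
        exact hmax r (Finset.mem_filter.mpr ⟨hr, le_trans hqe hle⟩) hlt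
      · rintro r hr ⟨hc1, hc2⟩
        have h1' : e.1 < r.1 := by rw [Fin.lt_def]; omega
        have hle : e ≤ r := Prod.le_def.mpr ⟨h1'.le, le_of_eq hc2.symm⟩
        have hlt : e < r := lt_of_le_of_ne hle (fun h => by
          rw [h] at h1'; exact lt_irrefl _ h1')
        exact hmax r (Finset.mem_filter.mpr ⟨hr, le_trans hqe hle⟩) hlt
    rw [effRegion, Finset.mem_filter]
    exact ⟨Finset.mem_univ _, e, heE, le_trans h1 (Prod.le_def.mp hqe).1,
      le_trans h2 (Prod.le_def.mp hqe).2⟩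

/-- Transition step (from the proof of Proposition 4.1): if `w ≠ 1` has last descent
`g`, and `m > g` is the largest index with `w(m) < w(g)`, then for `w' = w t_{g↔m}`:
`(g, w(m))` is an element of `E(w)` that is maximally southeast in `D(w)`,
`D(w') = D(w) \ {(g, w(m))}`, and consequently `λ(w') ⊊ λ(w)`. -/
theorem transition_diagram (n : ℕ) (w : Equiv.Perm (Fin n)) (hw : w ≠ 1)
    (g m : Fin n) (hg1 : (g : ℕ) + 1 < n)
    (hgdesc : w ⟨(g : ℕ) + 1, hg1⟩ < w g)
    (hglast : ∀ (j : Fin n) (hj : (j : ℕ) + 1 < n), w ⟨(j : ℕ) + 1, hj⟩ < w j → j ≤ g)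
    (hgm : g < m) (hwm : w m < w g)
    (hmmax : ∀ m' : Fin n, g < m' → w m' < w g → m' ≤ m) :
    (g, w m) ∈ essentialSet w ∧
    (∀ q ∈ rotheDiagram w, g ≤ q.1 → w m ≤ q.2 → q = (g, w m)) ∧
    rotheDiagram (w * Equiv.swap g m) = (rotheDiagram w).erase (g, w m) ∧
    effRegion (w * Equiv.swap g m) ⊂ effRegion w := by
  have hinv : w⁻¹ (w m) = m := w.symm_apply_apply m
  -- after position `g` the permutation is strictly increasing
  have step : ∀ (i : Fin n) (_ : g < i) (h1 : (i : ℕ) + 1 < n),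
      w i < w ⟨(i : ℕ) + 1, h1⟩ := by
    intro i hi h1
    by_contra h
    push_neg at h
    have hne : w ⟨(i : ℕ) + 1, h1⟩ ≠ w i := by
      intro he
      have h' : (i : ℕ) + 1 = (i : ℕ) := congrArg Fin.val (w.injective he)
      omega
    have := hglast i h1 (lt_of_le_of_ne h hne)
    exact absurd hi (not_lt.mpr this)
  have mono_aux : ∀ d : ℕ, ∀ i j : Fin n, g < i → (j : ℕ) = (i : ℕ) + d + 1 →
      w i < w j := by
    intro d
    induction d with
    | zero =>
      intro i j hi hj
      have h1 : (i : ℕ) + 1 < n := by have := j.isLt; omega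
      have hje : j = ⟨(i : ℕ) + 1, h1⟩ := Fin.ext (show (j : ℕ) = (i : ℕ) + 1 by omega)
      rw [hje]; exact step i hi h1
    | succ d ih =>
      intro i j hi hj
      have h1 : (i : ℕ) + 1 < n := by have := j.isLt; omega
      have hi' : g < (⟨(i : ℕ) + 1, h1⟩ : Fin n) :=
        lt_trans hi (Fin.lt_def.mpr (show (i : ℕ) < (i : ℕ) + 1 by omega))
      exact lt_trans (step i hi h1)
        (ih ⟨(i : ℕ) + 1, h1⟩ j hi' (show (j : ℕ) = (i : ℕ) + 1 + d + 1 by omega))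
  have mono : ∀ i j : Fin n, g < i → i < j → w i < w j := by
    intro i j hi hij
    exact mono_aux ((j : ℕ) - (i : ℕ) - 1) i j hi
      (by rw [Fin.lt_def] at hij; omega)
  -- positions strictly after m carry values above w g
  have hA : ∀ p : Fin n, m < p → w g < w p := by
    intro p hp
    by_contra h
    push_neg at h
    have hgp : g < p := lt_trans hgm hp
    have hne : w p ≠ w g := by
      intro he
      have := w.injective he
      rw [this] at hgp
      exact lt_irrefl _ hgp
    have := hmmax p hgp (lt_of_le_of_ne h hne)
    exact absurd hp (not_lt.mpr this)
  -- positions in (g, m] carry values at most w m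
  have hB : ∀ p : Fin n, g < p → p ≤ m → w p ≤ w m := by
    intro p hp hpm
    rcases eq_or_lt_of_le hpm with h | h
    · rw [h]
    · exact le_of_lt (mono p m hp h)
  -- Part 2: maximality southeast
  have part2 : ∀ q ∈ rotheDiagram w, g ≤ q.1 → w m ≤ q.2 → q = (g, w m) := by
    intro q hq hq1 hq2
    rw [mem_rotheDiagram] at hq
    obtain ⟨h1, h2⟩ := hq
    have hwp : w (w⁻¹ q.2) = q.2 := w.apply_symm_apply q.2
    have hi : q.1 = g := by
      rcases eq_or_lt_of_le hq1 with h | h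
      · exact h.symm
      · exfalso
        have := mono q.1 (w⁻¹ q.2) h h2
        rw [hwp] at this
        exact absurd h1 (not_lt.mpr this.le)
    have hgp : g < w⁻¹ q.2 := hi ▸ h2
    have hpm : w⁻¹ q.2 ≤ m := by
      by_contra h
      push_neg at h
      have := hA _ h
      rw [hwp] at this
      rw [hi] at h1
      exact absurd this (not_lt.mpr h1.le)
    have hle : q.2 ≤ w m := hwp ▸ hB _ hgp hpm
    have h2eq : q.2 = w m := le_antisymm hle hq2
    exact Prod.ext hi h2eq
  -- Part 1: essential set membership
  have part1 : (g, w m) ∈ essentialSet w := by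
    rw [essentialSet, Finset.mem_filter]
    refine ⟨?_, ?_, ?_⟩
    · rw [mem_rotheDiagram]
      exact ⟨hwm, by show g < w⁻¹ (w m); rw [hinv]; exact hgm⟩
    · rintro q hq ⟨hq1, hq2⟩
      have hq1' : q.1 = g := hq1
      have hq2' : (q.2 : ℕ) = (w m : ℕ) + 1 := hq2
      rw [mem_rotheDiagram] at hq
      obtain ⟨h1, h2⟩ := hq
      have hwp : w (w⁻¹ q.2) = q.2 := w.apply_symm_apply q.2
      rw [hq1'] at h2
      rcases le_or_gt (w⁻¹ q.2) m with h | h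
      · have := hB _ h2 h
        rw [hwp] at this
        rw [Fin.le_def] at this
        omega
      · have := hA _ h
        rw [hwp] at this
        rw [hq1'] at h1
        exact absurd h1 (not_lt.mpr this.le)
    · rintro q hq ⟨hq1, hq2⟩
      have hq1' : (q.1 : ℕ) = (g : ℕ) + 1 := hq1
      have hq2' : q.2 = w m := hq2
      rw [mem_rotheDiagram] at hq
      obtain ⟨h1, h2⟩ := hq
      rw [hq2', hinv] at h2
      have hgq : g < q.1 := by rw [Fin.lt_def]; omega
      have := hB q.1 hgq h2.le
      rw [hq2'] at h1
      exact absurd h1 (not_lt.mpr this)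
  -- Part 3: the diagram of w' is the diagram of w minus (g, w m)
  have part3 : rotheDiagram (w * Equiv.swap g m) = (rotheDiagram w).erase (g, w m) := by
    ext q
    obtain ⟨i, j⟩ := q
    rw [Finset.mem_erase, mem_rotheDiagram, mem_rotheDiagram]
    have hmulapp : (w * Equiv.swap g m) i = w (Equiv.swap g m i) := rfl
    have hinvapp : (w * Equiv.swap g m)⁻¹ j = Equiv.swap g m (w⁻¹ j) := by
      rw [mul_inv_rev, Equiv.Perm.mul_apply, Equiv.swap_inv]
    dsimp only
    rw [hmulapp, hinvapp]
    have hwp : w (w⁻¹ j) = j := w.apply_symm_apply j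
    set p := w⁻¹ j with hp
    rcases eq_or_ne i g with hig | hig
    · rw [hig, Equiv.swap_apply_left]
      rcases eq_or_ne p m with hpm | hpm
      · have hj : j = w m := by rw [← hwp, hpm]
        subst hj
        constructor
        · rintro ⟨h, -⟩; exact absurd h (lt_irrefl _)
        · rintro ⟨hne, -⟩; exact absurd rfl hne
      rcases eq_or_ne p g with hpg | hpg
      · have hj : j = w g := by rw [← hwp, hpg]
        subst hj
        constructor
        · rintro ⟨h, -⟩; exact absurd h (not_lt.mpr hwm.le)
        · rintro ⟨-, h, -⟩; exact absurd h (lt_irrefl _)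
      · rw [Equiv.swap_apply_of_ne_of_ne hpg hpm]
        have hne : ((g : Fin n), j) ≠ (g, w m) := by
          rintro h
          rw [Prod.mk.injEq] at h
          exact hpm (by rw [hp, h.2, hinv])
        constructor
        · rintro ⟨h1, h2⟩
          exact ⟨hne, lt_trans h1 hwm, h2⟩
        · rintro ⟨-, h1, h2⟩
          refine ⟨?_, h2⟩
          have hpm' : p < m := by
            by_contra h
            push_neg at h
            have := hA p (lt_of_le_of_ne h (Ne.symm hpm))
            rw [hwp] at this
            exact absurd h1 (not_lt.mpr this.le)
          have := mono p m h2 hpm'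
          rw [hwp] at this
          exact this
    rcases eq_or_ne i m with him | him
    · rw [him, Equiv.swap_apply_right]
      have hne : ((m : Fin n), j) ≠ (g, w m) := by
        rintro h
        rw [Prod.mk.injEq] at h
        exact absurd h.1 (ne_of_gt hgm)
      rcases eq_or_ne p m with hpm | hpm
      · have hj : j = w m := by rw [← hwp, hpm]
        subst hj
        rw [hpm, Equiv.swap_apply_right]
        constructor
        · rintro ⟨-, h⟩; exact absurd h (not_lt.mpr hgm.le)
        · rintro ⟨-, h, -⟩; exact absurd h (lt_irrefl _)
      rcases eq_or_ne p g with hpg | hpg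
      · have hj : j = w g := by rw [← hwp, hpg]
        subst hj
        rw [hpg, Equiv.swap_apply_left]
        constructor
        · rintro ⟨-, h⟩; exact absurd h (lt_irrefl _)
        · rintro ⟨-, h, -⟩; exact absurd h (not_lt.mpr hwm.le)
      · rw [Equiv.swap_apply_of_ne_of_ne hpg hpm]
        constructor
        · rintro ⟨h1, h2⟩
          exfalso
          have := hA p h2
          rw [hwp] at this
          exact absurd h1 (not_lt.mpr this.le)
        · rintro ⟨-, h1, h2⟩
          exfalso
          have := hA p h2
          rw [hwp] at this
          exact absurd h1 (not_lt.mpr (lt_trans hwm this).le)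
    · rw [Equiv.swap_apply_of_ne_of_ne hig him]
      have hne : ((i : Fin n), j) ≠ (g, w m) := by
        rintro h
        rw [Prod.mk.injEq] at h
        exact hig h.1
      rcases eq_or_ne p m with hpm | hpm
      · rw [hpm, Equiv.swap_apply_right]
        constructor
        · rintro ⟨h1, h2⟩
          exact ⟨hne, h1, lt_trans h2 hgm⟩
        · rintro ⟨-, h1, h2⟩
          refine ⟨h1, ?_⟩
          by_contra h
          push_neg at h
          have hgi : g < i := lt_of_le_of_ne h (Ne.symm hig)
          have := mono i m hgi h2
          have hj : j = w m := by rw [← hwp, hpm]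
          rw [hj] at h1
          exact absurd h1 (not_lt.mpr this.le)
      rcases eq_or_ne p g with hpg | hpg
      · rw [hpg, Equiv.swap_apply_left]
        have hj : j = w g := by rw [← hwp, hpg]
        constructor
        · rintro ⟨h1, h2⟩
          refine ⟨hne, h1, ?_⟩
          by_contra h
          push_neg at h
          have hgi : g < i := lt_of_le_of_ne h (Ne.symm hig)
          have := mono i m hgi h2
          rw [hj] at h1
          exact absurd h1 (not_lt.mpr (lt_trans this hwm).le)
        · rintro ⟨-, h1, h2⟩
          exact ⟨h1, lt_trans h2 hgm⟩
      · rw [Equiv.swap_apply_of_ne_of_ne hpg hpm]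
        constructor
        · rintro ⟨h1, h2⟩; exact ⟨hne, h1, h2⟩
        · rintro ⟨-, h1, h2⟩; exact ⟨h1, h2⟩
  -- Part 4: strict inclusion of effective regions
  have hsub : effRegion (w * Equiv.swap g m) ⊆ effRegion w := by
    intro p hp
    rw [mem_effRegion_iff] at hp ⊢
    obtain ⟨q, hq, h1, h2⟩ := hp
    rw [part3, Finset.mem_erase] at hq
    exact ⟨q, hq.2, h1, h2⟩
  have part4 : effRegion (w * Equiv.swap g m) ⊂ effRegion w := by
    rw [Finset.ssubset_iff_of_subset hsub]
    refine ⟨(g, w m), ?_, ?_⟩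
    · rw [effRegion, Finset.mem_filter]
      exact ⟨Finset.mem_univ _, (g, w m), part1, le_refl _, le_refl _⟩
    · intro hmem
      rw [mem_effRegion_iff] at hmem
      obtain ⟨q, hq, h1, h2⟩ := hmem
      rw [part3, Finset.mem_erase] at hq
      exact hq.1 (part2 q hq.2 h1 h2)
  exact ⟨part1, part2, part3, part4⟩
end
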